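/- Analytic torsion of the circle: Fix ψ ∈ ℝ with 0 < ψ < 2π. Let ζ(s, a) denote the Hurwitz zeta function, the meromorphic continuation in s of ∑_{k≥0} (k + a)^{−s}. Define Z(s) = 2·(2π)^{−2s}·( ζ(2s, ψ/(2π)) + ζ(2s, 1 − ψ/(2π)) ), the zeta function of the Laplacian on the flat O(2)-bundle over S¹ with holonomy angle ψ. Then Z is differentiable at s = 0 and the zeta-regularized determinant exp(−Z′(0)) equals (2·sin(ψ/2))⁴; equivalently, the corresponding Ray–Singer torsion exp(−Z′(0))^{1/2} = (2·sin(ψ/2))² = |e^{iψ} − 1|². -/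

import Mathlib

open Complex

open Filter Finset Topology HurwitzZeta

namespace AT

noncomputable def A (z : ℂ) (n : ℕ) : ℂ := ∑ k ∈ range n, z ^ (k + 1)

noncomputable def c (s : ℂ) (i : ℕ) : ℂ := ((i + 1 : ℕ) : ℂ) ^ (-s)

noncomputable def G (z s : ℂ) : ℂ := ∑' i : ℕ, (c s i - c s (i + 1)) * A z (i + 1)

noncomputable def t (δ : ℝ) (i : ℕ) : ℝ := ((i + 1 : ℕ) : ℝ) ^ (-δ)

lemma norm_A_le {z : ℂ} (hz1 : ‖z‖ = 1) (hz : z ≠ 1) (n : ℕ) : ‖A z n‖ ≤ 2 / ‖1 - z‖ := by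
  have h1z : z - 1 ≠ 0 := sub_ne_zero.mpr hz
  have hA : A z n = (z ^ n - 1) / (z - 1) * z := by
    rw [A, ← geom_sum_eq hz n, Finset.sum_mul]
    exact Finset.sum_congr rfl fun k _ => (pow_succ z k).symm
  rw [hA, norm_mul, hz1, mul_one, norm_div, norm_sub_rev z 1]
  apply div_le_div_of_nonneg_right ?_ ?_ |>.trans_eq rfl
  · exact (norm_sub_le _ _).trans (by norm_num [norm_pow, hz1])
  · simpa [norm_pos_iff] using sub_ne_zero.mpr (Ne.symm hz)


lemma rpow_cpow {x δ : ℝ} (hx : 1 ≤ x) (hδ : δ ≠ 0) (s : ℂ) :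
    ((x ^ (-δ) : ℝ) : ℂ) ^ (s / δ) = (x : ℂ) ^ (-s) := by
  have hx0 : (0:ℝ) ≤ x := zero_le_one.trans hx
  rw [Complex.ofReal_cpow hx0, Complex.ofReal_neg,
    ← Complex.cpow_mul _ ?_ ?_]
  · congr 1
    have : (δ : ℂ) ≠ 0 := Complex.ofReal_ne_zero.mpr hδ
    field_simp
  · simp [Complex.mul_im, Complex.log_im, Complex.arg_ofReal_of_nonneg hx0]
    positivity
  · simp [Complex.mul_im, Complex.log_im, Complex.arg_ofReal_of_nonneg hx0]
    exact Real.pi_pos.le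

lemma c_diff_bound {s : ℂ} {δ : ℝ} (hδ : 0 < δ) (hs : δ ≤ s.re) (i : ℕ) :
    ‖c s i - c s (i + 1)‖ ≤ ‖s‖ / δ * (t δ i - t δ (i + 1)) := by
  set w : ℂ := s / δ with hw
  have hδ' : (δ:ℝ) ≠ 0 := hδ.ne'
  have hrew : 1 ≤ w.re := by
    rw [hw, Complex.div_ofReal_re]
    exact (one_le_div hδ).mpr hs
  have hw0 : w ≠ 0 := fun h => by simp [h] at hrew; linarith
  have hnw : ‖w‖ = ‖s‖ / δ := by
    rw [hw]
    simp [norm_div, Complex.norm_real, Real.norm_eq_abs, abs_of_pos hδ]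
  -- endpoints
  set a : ℝ := t δ (i + 1) with ha
  set b : ℝ := t δ i with hb
  have hx1 : (1:ℝ) ≤ ((i + 1 : ℕ) : ℝ) := by exact_mod_cast Nat.one_le_iff_ne_zero.mpr (Nat.succ_ne_zero i)
  have hx2 : (1:ℝ) ≤ ((i + 2 : ℕ) : ℝ) := by exact_mod_cast Nat.one_le_iff_ne_zero.mpr (Nat.succ_ne_zero (i+1))
  have ha0 : 0 < a := by rw [ha, t]; positivity
  have hab : a ≤ b := by
    rw [ha, hb, t, t]
    exact Real.rpow_le_rpow_of_nonpos (by linarith) (by push_cast; linarith) (by linarith)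
  have hb1 : b ≤ 1 := Real.rpow_le_one_of_one_le_of_nonpos hx1 (by linarith)
  -- ψ and its derivative
  have hderiv : ∀ x ∈ Set.Icc a b, HasDerivWithinAt (fun u : ℝ => ((u:ℝ):ℂ) ^ w)
      (w * ((x:ℝ):ℂ) ^ (w - 1)) (Set.Icc a b) x := by
    intro x hx
    have hx0 : x ≠ 0 := (lt_of_lt_of_le ha0 hx.1).ne'
    have h1 : HasDerivAt (fun u : ℝ => ((u:ℝ):ℂ) ^ (w - 1 + 1) / (w - 1 + 1)) (((x:ℝ):ℂ) ^ (w - 1)) x :=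
      hasDerivAt_ofReal_cpow_const' hx0 (by intro h; apply hw0; linear_combination h)
    have h2 := h1.const_mul w
    have : HasDerivAt (fun u : ℝ => ((u:ℝ):ℂ) ^ w) (w * ((x:ℝ):ℂ) ^ (w - 1)) x := by
      have hww : w - 1 + 1 = w := by ring
      rw [hww] at h1 h2
      have e : (fun y : ℝ => w * (((y:ℝ):ℂ) ^ w / w)) = fun u : ℝ => ((u:ℝ):ℂ) ^ w := by
        funext u
        field_simp
      rw [e] at h2
      exact h2
    exact this.hasDerivWithinAt
  have hbound : ∀ x ∈ Set.Ico a b, ‖w * ((x:ℝ):ℂ) ^ (w - 1)‖ ≤ ‖w‖ := by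
    intro x hx
    rw [norm_mul]
    have hx0 : 0 < x := lt_of_lt_of_le ha0 hx.1
    have : ‖((x:ℝ):ℂ) ^ (w - 1)‖ ≤ 1 := by
      rw [Complex.norm_cpow_eq_rpow_re_of_pos hx0]
      exact Real.rpow_le_one hx0.le (le_trans hx.2.le hb1) (by simp; linarith)
    nlinarith [norm_nonneg w]
  have := norm_image_sub_le_of_norm_deriv_le_segment' hderiv hbound b (Set.right_mem_Icc.mpr hab)
  -- rewrite ψ b, ψ a as c values
  have hψb : ((b:ℝ):ℂ) ^ w = c s i := by
    rw [hb, t, rpow_cpow hx1 hδ', c]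
    norm_cast
  have hψa : ((a:ℝ):ℂ) ^ w = c s (i + 1) := by
    rw [ha, t, rpow_cpow hx2 hδ', c]
    norm_cast
  rw [hψb, hψa, hnw] at this
  exact this

lemma t_nonneg {δ : ℝ} (i : ℕ) : 0 ≤ t δ i := by rw [t]; positivity

lemma t_antitone {δ : ℝ} (hδ : 0 < δ) (i : ℕ) : t δ (i + 1) ≤ t δ i := by
  rw [t, t]
  refine Real.rpow_le_rpow_of_nonpos (by positivity) ?_ (by linarith)
  push_cast; linarith

lemma t_le_one {δ : ℝ} (hδ : 0 < δ) (i : ℕ) : t δ i ≤ 1 :=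
  Real.rpow_le_one_of_one_le_of_nonpos
    (by exact_mod_cast Nat.one_le_iff_ne_zero.mpr (Nat.succ_ne_zero i)) (by linarith)

lemma t_tendsto {δ : ℝ} (hδ : 0 < δ) : Tendsto (t δ) atTop (𝓝 0) := by
  have h : Tendsto (fun x : ℝ => x ^ (-δ)) atTop (𝓝 0) := tendsto_rpow_neg_atTop hδ
  exact h.comp (tendsto_natCast_atTop_atTop.comp (tendsto_add_atTop_nat 1))

lemma hasSum_t_diff {δ : ℝ} (hδ : 0 < δ) (m : ℕ) :
    HasSum (fun i => t δ (m + i) - t δ (m + i + 1)) (t δ m) := by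
  rw [hasSum_iff_tendsto_nat_of_nonneg (fun i => sub_nonneg.mpr (t_antitone hδ _))]
  have htel : ∀ n, ∑ i ∈ range n, (t δ (m + i) - t δ (m + i + 1)) = t δ m - t δ (m + n) := by
    intro n
    simpa [add_assoc] using Finset.sum_range_sub' (fun i => t δ (m + i)) n
  simp_rw [htel]
  have h2 : Tendsto (fun n : ℕ => t δ (m + n)) atTop (𝓝 0) :=
    (t_tendsto hδ).comp (tendsto_add_atTop_nat m |>.congr (fun n => by rw [Nat.add_comm]))
  simpa using (tendsto_const_nhds (x := t δ m)).sub h2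

lemma norm_d_le {z s : ℂ} {δ : ℝ} (hδ : 0 < δ) (hs : δ ≤ s.re)
    (hz1 : ‖z‖ = 1) (hz : z ≠ 1) (i : ℕ) :
    ‖(c s i - c s (i + 1)) * A z (i + 1)‖ ≤
      (‖s‖ / δ * (2 / ‖1 - z‖)) * (t δ i - t δ (i + 1)) := by
  calc ‖(c s i - c s (i + 1)) * A z (i + 1)‖
      = ‖c s i - c s (i + 1)‖ * ‖A z (i + 1)‖ := norm_mul _ _
    _ ≤ (‖s‖ / δ * (t δ i - t δ (i + 1))) * (2 / ‖1 - z‖) := by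
        refine mul_le_mul (c_diff_bound hδ hs i) (norm_A_le hz1 hz _) (norm_nonneg _) ?_
        have := sub_nonneg.mpr (t_antitone hδ i)
        positivity
    _ = (‖s‖ / δ * (2 / ‖1 - z‖)) * (t δ i - t δ (i + 1)) := by ring

lemma summable_d {z s : ℂ} {δ : ℝ} (hδ : 0 < δ) (hs : δ ≤ s.re)
    (hz1 : ‖z‖ = 1) (hz : z ≠ 1) :
    Summable (fun i : ℕ => (c s i - c s (i + 1)) * A z (i + 1)) := by
  refine Summable.of_norm_bounded
    (((hasSum_t_diff hδ 0).summable.congr (fun i => by simp)).mul_left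
      (‖s‖ / δ * (2 / ‖1 - z‖)))
    (fun i => (norm_d_le hδ hs hz1 hz i).trans_eq rfl)

set_option maxHeartbeats 1000000 in
lemma tail_bound {z s : ℂ} {δ : ℝ} (hδ : 0 < δ) (hs : δ ≤ s.re)
    (hz1 : ‖z‖ = 1) (hz : z ≠ 1) (m : ℕ) :
    ‖G z s - ∑ i ∈ range m, (c s i - c s (i + 1)) * A z (i + 1)‖ ≤
      (‖s‖ / δ * (2 / ‖1 - z‖)) * t δ m := by
  have hsum := summable_d hδ hs hz1 hz
  have hsplit := Summable.sum_add_tsum_nat_add m hsum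
  have : G z s - ∑ i ∈ range m, (c s i - c s (i + 1)) * A z (i + 1)
      = ∑' i : ℕ, (c s (i + m) - c s (i + m + 1)) * A z (i + m + 1) := by
    rw [G, ← hsplit]; exact add_sub_cancel_left _ _
  rw [this]
  have hsumm : Summable (fun i : ℕ => (c s (i + m) - c s (i + m + 1)) * A z (i + m + 1)) :=
    (summable_nat_add_iff m).mpr hsum
  calc ‖∑' i : ℕ, (c s (i + m) - c s (i + m + 1)) * A z (i + m + 1)‖
      ≤ ∑' i : ℕ, ‖(c s (i + m) - c s (i + m + 1)) * A z (i + m + 1)‖ :=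
        norm_tsum_le_tsum_norm hsumm.norm
    _ ≤ ∑' i : ℕ, (‖s‖ / δ * (2 / ‖1 - z‖)) * (t δ (m + i) - t δ (m + i + 1)) := by
        refine Summable.tsum_le_tsum (fun i => ?_) hsumm.norm (((hasSum_t_diff hδ m).summable).mul_left _)
        simpa [Nat.add_comm m i] using norm_d_le hδ hs hz1 hz (i + m)
    _ = (‖s‖ / δ * (2 / ‖1 - z‖)) * t δ m := by
        rw [((hasSum_t_diff hδ m).mul_left _).tsum_eq]


noncomputable def F (z s : ℂ) (n : ℕ) : ℂ := ∑ i ∈ range n, c s i * z ^ (i + 1)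

lemma by_parts (z s : ℂ) (n : ℕ) :
    F z s n = c s (n - 1) * A z n + ∑ i ∈ range (n - 1), (c s i - c s (i + 1)) * A z (i + 1) := by
  have h := Finset.sum_range_by_parts (c s) (fun k => z ^ (k + 1)) n
  simp only [smul_eq_mul] at h
  rw [F, h, show (∑ i ∈ range n, z ^ (i + 1)) = A z n from rfl, sub_eq_add_neg,
    ← Finset.sum_neg_distrib]
  congr 1
  refine Finset.sum_congr rfl fun i _ => ?_
  rw [show (∑ k ∈ range (i + 1), z ^ (k + 1)) = A z (i + 1) from rfl]
  ring

lemma norm_c (s : ℂ) (i : ℕ) : ‖c s i‖ = t s.re i := by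
  rw [c, t, show ((i + 1 : ℕ) : ℂ) = (((i + 1 : ℕ) : ℝ) : ℂ) by push_cast; ring,
    Complex.norm_cpow_eq_rpow_re_of_pos (by positivity)]
  simp

lemma tendsto_F {z s : ℂ} (hz1 : ‖z‖ = 1) (hz : z ≠ 1) (hs : 0 < s.re) :
    Tendsto (F z s) atTop (𝓝 (G z s)) := by
  have h1 : Tendsto (fun n : ℕ => c s (n - 1) * A z n) atTop (𝓝 0) := by
    apply squeeze_zero_norm (a := fun n : ℕ => t s.re (n - 1) * (2 / ‖1 - z‖))
    · intro n
      rw [norm_mul, norm_c]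
      exact mul_le_mul_of_nonneg_left (norm_A_le hz1 hz n) (t_nonneg _)
    · simpa using (((t_tendsto hs).comp (tendsto_sub_atTop_nat 1)).mul_const (2 / ‖1 - z‖))
  have h2 : Tendsto (fun n : ℕ => ∑ i ∈ range (n - 1), (c s i - c s (i + 1)) * A z (i + 1))
      atTop (𝓝 (G z s)) :=
    ((summable_d hs le_rfl hz1 hz).hasSum.tendsto_sum_nat).comp (tendsto_sub_atTop_nat 1)
  have := h1.add h2
  rw [zero_add] at this
  exact this.congr (fun n => (by_parts z s n).symm)

lemma isOpen_half : IsOpen {s : ℂ | 1 / 2 < s.re} := isOpen_lt continuous_const Complex.continuous_re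

lemma diffOn_G {z : ℂ} (hz1 : ‖z‖ = 1) (hz : z ≠ 1) :
    DifferentiableOn ℂ (G z) {s : ℂ | 1 / 2 < s.re} := by
  refine TendstoLocallyUniformlyOn.differentiableOn (ι := ℕ) (φ := atTop) (F := fun n s => F z s n) ?_ ?_ isOpen_half
  · rw [tendstoLocallyUniformlyOn_iff_forall_isCompact isOpen_half]
    intro K hK hKc
    rcases hKc.isBounded.subset_closedBall 0 with ⟨R, hR⟩
    rw [Metric.tendstoUniformlyOn_iff]
    intro ε hε
    set B : ℝ := 2 / ‖1 - z‖ with hB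
    have hB0 : 0 < B := by
      rw [hB]
      have : (0:ℝ) < ‖1 - z‖ := by
        simpa [norm_pos_iff] using sub_ne_zero.mpr (Ne.symm hz)
      positivity
    set C : ℝ := (2 * (max R 0) + 1) * B with hC
    have hC0 : 0 < C := by positivity
    have hkey : ∀ n : ℕ, 1 ≤ n → ∀ s ∈ K, dist (G z s) (F z s n) ≤ C * t (1/2) (n - 1) := by
      intro n hn s hsK
      have hsre : 1 / 2 < s.re := hK hsK
      have hsR : ‖s‖ ≤ max R 0 := le_trans (by simpa using hR hsK) (le_max_left _ _)
      rw [dist_eq_norm, by_parts z s n]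
      have e1 : G z s - (c s (n-1) * A z n + ∑ i ∈ range (n-1), (c s i - c s (i+1)) * A z (i+1))
          = (G z s - ∑ i ∈ range (n-1), (c s i - c s (i+1)) * A z (i+1)) - c s (n-1) * A z n := by
        ring
      rw [e1]
      have h2 : ‖G z s - ∑ i ∈ range (n-1), (c s i - c s (i+1)) * A z (i+1)‖
          ≤ (‖s‖ / (1/2) * B) * t (1/2) (n-1) := tail_bound (by norm_num) hsre.le hz1 hz (n-1)
      have h3 : ‖c s (n-1) * A z n‖ ≤ B * t (1/2) (n-1) := by
        rw [norm_mul, norm_c]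
        have h4 : t s.re (n-1) ≤ t (1/2) (n-1) := by
          rw [t, t]
          exact Real.rpow_le_rpow_of_exponent_le
            (by exact_mod_cast Nat.one_le_iff_ne_zero.mpr (Nat.succ_ne_zero _)) (by linarith)
        calc t s.re (n-1) * ‖A z n‖ ≤ t (1/2) (n-1) * B :=
          mul_le_mul h4 (norm_A_le hz1 hz n) (norm_nonneg _) (t_nonneg _)
        _ = B * t (1/2) (n-1) := by ring
      have h5 := (norm_sub_le _ _).trans (add_le_add h2 h3)
      refine h5.trans ?_
      have ht0 : 0 ≤ t (1/2) (n-1) := t_nonneg _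
      have : ‖s‖ / (1/2) ≤ 2 * max R 0 := by
        rw [div_eq_mul_inv]
        nlinarith
      calc ‖s‖ / (1/2) * B * t (1/2) (n-1) + B * t (1/2) (n-1)
          ≤ 2 * max R 0 * B * t (1/2) (n-1) + B * t (1/2) (n-1) := by
            have h6 := mul_le_mul_of_nonneg_right (mul_le_mul_of_nonneg_right this hB0.le) ht0
            linarith
        _ = C * t (1/2) (n-1) := by rw [hC]; ring
    have htend : Tendsto (fun n : ℕ => C * t (1/2) (n-1)) atTop (𝓝 0) := by
      simpa using ((t_tendsto (by norm_num : (0:ℝ) < 1/2)).comp (tendsto_sub_atTop_nat 1)).const_mul C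
    filter_upwards [htend.eventually_lt_const hε, eventually_ge_atTop 1] with n h1n h2n s hsK
    exact lt_of_le_of_lt (hkey n h2n s hsK) h1n
  · refine Filter.Eventually.of_forall (fun n => ?_)
    refine Differentiable.differentiableOn (fun s => ?_)
    refine DifferentiableAt.fun_sum (fun i _ => ?_)
    have hbase : ((i + 1 : ℕ) : ℂ) ≠ 0 := Nat.cast_ne_zero.mpr (Nat.succ_ne_zero i)
    exact (((differentiable_id.neg).const_cpow (Or.inl hbase)) s).mul_const _

lemma G_eq_expZeta (a' : ℝ) {s : ℂ} (hs : 1 < s.re)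
    (hz : cexp (2 * Real.pi * I * a') ≠ 1) :
    G (cexp (2 * Real.pi * I * a')) s = expZeta (↑a' : UnitAddCircle) s := by
  set z : ℂ := cexp (2 * Real.pi * I * a') with hzdef
  have hz1 : ‖z‖ = 1 := by
    rw [hzdef, Complex.norm_exp]
    norm_num [Complex.mul_re, Complex.mul_im]
  have hs0 : s ≠ 0 := by
    intro h; rw [h] at hs; simp at hs; linarith
  have hsum := hasSum_expZeta_of_one_lt_re a' hs
  have hsum1 : HasSum (fun n : ℕ => cexp (2 * Real.pi * I * a' * ((n + 1 : ℕ) : ℂ)) / ((n + 1 : ℕ) : ℂ) ^ s)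
      (expZeta (↑a' : UnitAddCircle) s) := by
    have h0 : ∑ i ∈ range 1, cexp (2 * Real.pi * I * a' * i) / (i : ℂ) ^ s = 0 := by
      simp [Complex.zero_cpow hs0]
    refine (hasSum_nat_add_iff (f := fun n : ℕ => cexp (2 * Real.pi * I * a' * n) / (n : ℂ) ^ s) 1).mpr ?_
    rw [h0, add_zero]
    exact hsum
  have hsum2 : HasSum (fun n : ℕ => c s n * z ^ (n + 1)) (expZeta (↑a' : UnitAddCircle) s) := by
    refine hsum1.congr_fun (fun n => ?_)
    rw [c, hzdef, ← Complex.exp_nat_mul, Complex.cpow_neg, div_eq_mul_inv, mul_comm]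
    congr 2
    push_cast
    ring
  exact tendsto_nhds_unique (tendsto_F hz1 hz (by linarith)) hsum2.tendsto_sum_nat

lemma G_one {z : ℂ} (hz1 : ‖z‖ = 1) (hz : z ≠ 1) : G z 1 = -Complex.log (1 - z) := by
  set f : ℕ → ℂ := fun n => z ^ n * (n : ℂ)⁻¹ with hf
  have hF : ∀ n : ℕ, ∑ i ∈ range n, f i = F z 1 (n - 1) := by
    intro n
    cases n with
    | zero => simp [F]
    | succ m =>
      rw [Finset.sum_range_succ' f m]
      have : f 0 = 0 := by simp [hf]
      rw [this, add_zero, Nat.succ_sub_one, F]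
      refine Finset.sum_congr rfl fun i _ => ?_
      rw [hf, c, Complex.cpow_neg_one]
      push_cast
      ring
  have hpartial : Tendsto (fun n => ∑ i ∈ range n, f i) atTop (𝓝 (G z 1)) := by
    have h1 : Tendsto (F z 1) atTop (𝓝 (G z 1)) := tendsto_F hz1 hz (by norm_num)
    exact (h1.comp (tendsto_sub_atTop_nat 1)).congr (fun n => (hF n).symm)
  have habel : Tendsto (fun w : ℂ => ∑' n : ℕ, f n * w ^ n)
      (𝓝[Complex.stolzSet 2] 1) (𝓝 (G z 1)) :=
    Complex.tendsto_tsum_powerSeries_nhdsWithin_stolzSet hpartial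
  have hreal : Tendsto (fun x : ℝ => (x : ℂ)) (𝓝[<] (1:ℝ)) (𝓝[Complex.stolzSet 2] 1) :=
    Complex.nhdsWithin_lt_le_nhdsWithin_stolzSet one_lt_two
  have h2 : Tendsto (fun x : ℝ => ∑' n : ℕ, f n * (x : ℂ) ^ n) (𝓝[<] (1:ℝ)) (𝓝 (G z 1)) :=
    habel.comp hreal
  have hslit : (1 : ℂ) - z ∈ Complex.slitPlane := by
    rw [Complex.mem_slitPlane_iff]
    rcases lt_or_ge z.re 1 with h | h
    · left; simp [Complex.sub_re]; linarith
    · right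
      intro him
      apply hz
      have hre : z.re ≤ 1 := by
        have := Complex.abs_re_le_norm z
        rw [hz1] at this
        cases abs_le.mp this; assumption
      have hre1 : z.re = 1 := le_antisymm hre h
      have him0 : z.im = 0 := by
        have := Complex.sq_norm z
        rw [hz1, Complex.normSq_apply, hre1] at this
        nlinarith
      have : z.im = 0 := him0
      exact Complex.ext hre1 him0
  have h3 : Tendsto (fun x : ℝ => -Complex.log (1 - (x : ℂ) * z)) (𝓝[<] (1:ℝ))
      (𝓝 (-Complex.log (1 - z))) := by
    have hinner : Tendsto (fun x : ℝ => 1 - (x : ℂ) * z) (𝓝[<] (1:ℝ)) (𝓝 (1 - z)) := by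
      have hcont : Continuous (fun x : ℝ => 1 - (x : ℂ) * z) :=
        continuous_const.sub (Complex.continuous_ofReal.mul continuous_const)
      have := hcont.tendsto (1 : ℝ)
      simp only [Complex.ofReal_one, one_mul] at this
      exact this.mono_left nhdsWithin_le_nhds
    exact ((continuousAt_clog hslit).tendsto.comp hinner).neg
  have h4 : ∀ᶠ x : ℝ in 𝓝[<] (1:ℝ), ∑' n : ℕ, f n * (x : ℂ) ^ n = -Complex.log (1 - (x : ℂ) * z) := by
    filter_upwards [Ioo_mem_nhdsLT_of_mem (show (1:ℝ) ∈ Set.Ioc (-1 : ℝ) 1 by constructor <;> norm_num)]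
      with x hx
    have hxz : ‖(x : ℂ) * z‖ < 1 := by
      rw [norm_mul, hz1, mul_one, Complex.norm_real, Real.norm_eq_abs, abs_lt]
      exact ⟨hx.1, hx.2⟩
    rw [← (hasSum_taylorSeries_neg_log hxz).tsum_eq]
    refine tsum_congr fun n => ?_
    rw [hf, mul_pow, div_eq_mul_inv]
    ring
  exact tendsto_nhds_unique (h2.congr' h4) h3

lemma expZeta_one (a' : ℝ) (haz : ((a' : ℝ) : UnitAddCircle) ≠ 0) :
    expZeta (↑a' : UnitAddCircle) 1 = -Complex.log (1 - cexp (2 * Real.pi * I * a')) := by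
  set z : ℂ := cexp (2 * Real.pi * I * a') with hzdef
  have hz : z ≠ 1 := by
    rw [hzdef, Ne, Complex.exp_eq_one_iff]
    rintro ⟨n, hn⟩
    apply haz
    have hπI : (2 * (Real.pi:ℂ) * I : ℂ) ≠ 0 :=
      mul_ne_zero (mul_ne_zero two_ne_zero (Complex.ofReal_ne_zero.mpr Real.pi_ne_zero)) I_ne_zero
    have ha : (a' : ℂ) = n := by
      have h5 : (2 * (Real.pi:ℂ) * I) * a' = (2 * (Real.pi:ℂ) * I) * n := by rw [hn]; ring
      exact mul_left_cancel₀ hπI h5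
    have h2 : a' = (n : ℝ) := by exact_mod_cast ha
    rw [h2, AddCircle.coe_eq_zero_iff]
    exact ⟨n, by simp⟩
  have hz1 : ‖z‖ = 1 := by
    rw [hzdef, Complex.norm_exp]
    norm_num [Complex.mul_re, Complex.mul_im]
  have heq : Set.EqOn (G z) (expZeta (↑a' : UnitAddCircle)) {s : ℂ | 1 / 2 < s.re} := by
    refine AnalyticOnNhd.eqOn_of_preconnected_of_eventuallyEq
      ((diffOn_G hz1 hz).analyticOnNhd isOpen_half)
      (((differentiable_expZeta_of_ne_zero haz).differentiableOn).analyticOnNhd isOpen_half)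
      (convex_halfSpace_re_gt _).isPreconnected (z₀ := (2 : ℂ)) (by norm_num [Set.mem_setOf_eq]) ?_
    have hmem : {s : ℂ | 1 < s.re} ∈ 𝓝 (2 : ℂ) :=
      (isOpen_lt continuous_const Complex.continuous_re).mem_nhds (by norm_num)
    filter_upwards [hmem] with s hs
    exact G_eq_expZeta a' hs hz
  have h1 : (1 : ℂ) ∈ {s : ℂ | 1 / 2 < s.re} := by norm_num
  rw [← heq h1, G_one hz1 hz]

end AT


open HurwitzZeta

/-- Analytic torsion of the circle: for `0 < ψ < 2π`, the zeta function
`Z(s) = 2·(2π)^{-2s}·(ζ(2s, ψ/2π) + ζ(2s, 1 − ψ/2π))` of the Laplacian on the flat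
`O(2)`-bundle over `S¹` with holonomy angle `ψ` is differentiable at `s = 0`, the
zeta-regularized determinant `exp(−Z′(0))` equals `(2 sin(ψ/2))⁴`, and the Ray–Singer
torsion `exp(−Z′(0))^{1/2}` equals `(2 sin(ψ/2))² = |e^{iψ} − 1|²`. -/
theorem analytic_torsion_circle (ψ : ℝ) (h0 : 0 < ψ) (h2π : ψ < 2 * Real.pi)
    (Z : ℂ → ℂ)
    (hZ : ∀ s : ℂ, Z s = 2 * (2 * Real.pi : ℂ) ^ (-2 * s) *
      (HurwitzZeta.hurwitzZeta ((ψ / (2 * Real.pi) : ℝ) : UnitAddCircle) (2 * s) +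
        HurwitzZeta.hurwitzZeta ((1 - ψ / (2 * Real.pi) : ℝ) : UnitAddCircle) (2 * s))) :
    DifferentiableAt ℂ Z 0 ∧
    Complex.exp (-(deriv Z 0)) = ((2 * Real.sin (ψ / 2)) ^ 4 : ℝ) ∧
    Complex.exp (-(deriv Z 0) / 2) = ((2 * Real.sin (ψ / 2)) ^ 2 : ℝ) ∧
    ((2 * Real.sin (ψ / 2)) ^ 2 : ℝ) =
      (‖Complex.exp (ψ * Complex.I) - 1‖) ^ 2 := by
  have hπ : (0:ℝ) < Real.pi := Real.pi_pos
  have hπ0 : (Real.pi : ℂ) ≠ 0 := Complex.ofReal_ne_zero.mpr hπ.ne'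
  have h2π0 : (2 * Real.pi : ℂ) ≠ 0 := by
    intro h
    rw [show (2 * Real.pi : ℂ) = 2 * (Real.pi:ℂ) from by push_cast; ring] at h
    exact mul_ne_zero two_ne_zero hπ0 h
  set a : ℝ := ψ / (2 * Real.pi) with hadef
  have ha1 : 0 < a := div_pos h0 (by positivity)
  have ha2 : a < 1 := (div_lt_one (by positivity)).mpr h2π
  have haz : ((a : ℝ) : UnitAddCircle) ≠ 0 := by
    rw [Ne, AddCircle.coe_eq_zero_iff]
    rintro ⟨n, hn⟩
    simp only [zsmul_eq_mul, mul_one] at hn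
    have h1 : (0:ℤ) < n := by exact_mod_cast hn ▸ ha1
    have h2 : n < (1:ℤ) := by exact_mod_cast hn ▸ ha2
    omega
  have hmaz : ((-a : ℝ) : UnitAddCircle) ≠ 0 := by
    rw [Ne, AddCircle.coe_eq_zero_iff]
    rintro ⟨n, hn⟩
    simp only [zsmul_eq_mul, mul_one] at hn
    have h1 : ((-n):ℝ) = a := by push_cast; linarith
    have h2 : (0:ℤ) < -n := by exact_mod_cast h1 ▸ ha1
    have h3 : -n < (1:ℤ) := by exact_mod_cast h1 ▸ ha2
    omega
  have hcoe : ((1 - a : ℝ) : UnitAddCircle) = -((a : ℝ) : UnitAddCircle) := by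
    have h1 : ((1 - a : ℝ) : UnitAddCircle) = ((1:ℝ) : UnitAddCircle) - ((a:ℝ) : UnitAddCircle) :=
      QuotientAddGroup.mk_sub _ 1 a
    rw [h1, AddCircle.coe_period, zero_sub]
  -- the comparison function
  set Wf : ℂ → ℂ := fun s => 8 * (2*(Real.pi:ℂ))⁻¹ *
      (Complex.Gamma (1 - 2*s) * cosZeta ((a : ℝ) : UnitAddCircle) (1 - 2*s)) *
      Complex.sin ((Real.pi:ℂ) * s) with hWdef
  have hZW : Z =ᶠ[𝓝 (0:ℂ)] Wf := by
    have hmem : {s : ℂ | s.re < 1/4} ∈ 𝓝 (0:ℂ) :=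
      (isOpen_lt Complex.continuous_re continuous_const).mem_nhds (by norm_num)
    filter_upwards [hmem] with s hs
    have hs' : ∀ n : ℕ, (1 - 2*s : ℂ) ≠ -n := by
      intro n h
      have := congrArg Complex.re h
      simp only [Complex.sub_re, Complex.one_re, Complex.mul_re, Complex.neg_re,
        Complex.natCast_re] at this
      norm_num at this
      have hn : (0:ℝ) ≤ (n:ℝ) := Nat.cast_nonneg n
      linarith
    have hdecomp : hurwitzZeta ((a : ℝ) : UnitAddCircle) (2*s)
        + hurwitzZeta ((1 - a : ℝ) : UnitAddCircle) (2*s)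
        = 2 * hurwitzZetaEven ((a : ℝ) : UnitAddCircle) (2*s) := by
      rw [hcoe]
      simp only [hurwitzZeta, hurwitzZetaEven_neg, hurwitzZetaOdd_neg]
      ring
    rw [hZ s, hdecomp]
    have hfe := hurwitzZetaEven_one_sub ((a : ℝ) : UnitAddCircle) hs' (Or.inl haz)
    rw [show (2*s : ℂ) = 1 - (1 - 2*s) from by ring, hfe]
    have hpow : (2 * Real.pi : ℂ) ^ (-2*s) * (2 * Real.pi : ℂ) ^ (-(1-2*s))
        = (2*(Real.pi:ℂ))⁻¹ := by
      rw [← Complex.cpow_add _ _ h2π0, show (-2*s + -(1-2*s) : ℂ) = -1 from by ring,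
        Complex.cpow_neg_one]
    have hcos : Complex.cos ((Real.pi:ℂ) * (1 - 2*s) / 2) = Complex.sin ((Real.pi:ℂ) * s) := by
      rw [show ((Real.pi:ℂ) * (1 - 2*s) / 2) = (Real.pi:ℂ)/2 - (Real.pi:ℂ)*s from by ring]
      exact Complex.cos_pi_div_two_sub _
    rw [hWdef]
    have : (2 * Real.pi : ℂ) = 2 * (Real.pi:ℂ) := by push_cast; ring
    rw [this] at hpow ⊢
    calc 2 * (2 * (Real.pi:ℂ)) ^ (-2 * s) *
          (2 * (2 * (2*(Real.pi:ℂ)) ^ (-(1 - 2*s)) * Complex.Gamma (1 - 2*s) *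
            Complex.cos ((Real.pi:ℂ) * (1 - 2*s) / 2) *
            cosZeta ((a : ℝ) : UnitAddCircle) (1 - 2*s)))
        = 8 * ((2*(Real.pi:ℂ)) ^ (-2*s) * (2*(Real.pi:ℂ)) ^ (-(1-2*s))) *
            (Complex.Gamma (1 - 2*s) * cosZeta ((a : ℝ) : UnitAddCircle) (1 - 2*s)) *
            Complex.cos ((Real.pi:ℂ) * (1 - 2*s) / 2) := by ring
      _ = 8 * (2*(Real.pi:ℂ))⁻¹ *
            (Complex.Gamma (1 - 2*s) * cosZeta ((a : ℝ) : UnitAddCircle) (1 - 2*s)) *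
            Complex.sin ((Real.pi:ℂ) * s) := by rw [hpow, hcos]
  -- derivative of Wf
  have hGam : DifferentiableAt ℂ (fun s : ℂ => Complex.Gamma (1 - 2*s)) 0 := by
    have h1 : DifferentiableAt ℂ Complex.Gamma ((fun s : ℂ => 1 - 2*s) 0) := by
      have : ∀ m : ℕ, (1:ℂ) - 2*0 ≠ -m := by
        intro m h
        have := congrArg Complex.re h
        simp at this
        have hn : (0:ℝ) ≤ (m:ℝ) := Nat.cast_nonneg m
        linarith
      simpa using Complex.differentiableAt_Gamma _ (by simpa using this)
    exact h1.comp 0 (by fun_prop)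
  have hcosZ : DifferentiableAt ℂ (fun s : ℂ => cosZeta ((a : ℝ) : UnitAddCircle) (1 - 2*s)) 0 := by
    have h1 : DifferentiableAt ℂ (cosZeta ((a : ℝ) : UnitAddCircle)) ((fun s : ℂ => 1 - 2*s) 0) :=
      differentiableAt_cosZeta _ (Or.inr haz)
    exact h1.comp 0 (by fun_prop)
  set g : ℂ → ℂ := fun s => 8 * (2*(Real.pi:ℂ))⁻¹ *
      (Complex.Gamma (1 - 2*s) * cosZeta ((a : ℝ) : UnitAddCircle) (1 - 2*s)) with hgdef
  have hg : DifferentiableAt ℂ g 0 := ((hGam.mul hcosZ).const_mul _)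
  have hsin : HasDerivAt (fun s : ℂ => Complex.sin ((Real.pi:ℂ) * s))
      (Complex.cos ((Real.pi:ℂ) * 0) * ((Real.pi:ℂ) * 1)) 0 :=
    (Complex.hasDerivAt_sin ((Real.pi:ℂ) * 0)).comp 0 ((hasDerivAt_id (0:ℂ)).const_mul _)
  have hWd : HasDerivAt Wf (deriv g 0 * Complex.sin ((Real.pi:ℂ) * 0)
      + g 0 * (Complex.cos ((Real.pi:ℂ) * 0) * ((Real.pi:ℂ) * 1))) 0 := hg.hasDerivAt.mul hsin
  have hWdiff : DifferentiableAt ℂ Wf 0 := hWd.differentiableAt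
  have hderivW : deriv Wf 0 = 4 * cosZeta ((a : ℝ) : UnitAddCircle) 1 := by
    rw [hWd.deriv]
    rw [mul_zero, Complex.sin_zero, mul_zero, zero_add, Complex.cos_zero, one_mul, mul_one]
    rw [hgdef]
    simp only []
    rw [show (1:ℂ) - 2*0 = 1 from by ring, Complex.Gamma_one, one_mul]
    field_simp
    ring
  have hZdiff : DifferentiableAt ℂ Z 0 := (hZW.differentiableAt_iff).mpr hWdiff
  have hderivZ : deriv Z 0 = 4 * cosZeta ((a : ℝ) : UnitAddCircle) 1 := by
    rw [hZW.deriv_eq, hderivW]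
  -- evaluate cosZeta at 1
  set w₁ : ℂ := 1 - Complex.exp ((ψ:ℂ) * Complex.I) with hw1def
  set w₂ : ℂ := 1 - Complex.exp (-((ψ:ℂ) * Complex.I)) with hw2def
  have harg1 : 2 * (Real.pi:ℂ) * Complex.I * (a:ℂ) = (ψ:ℂ) * Complex.I := by
    rw [hadef]
    push_cast
    field_simp
  have harg2 : 2 * (Real.pi:ℂ) * Complex.I * ((-a:ℝ):ℂ) = -((ψ:ℂ) * Complex.I) := by
    push_cast
    rw [show 2 * (Real.pi:ℂ) * Complex.I * (-(a:ℂ)) = -(2 * (Real.pi:ℂ) * Complex.I * (a:ℂ)) from by ring, harg1]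
  have hcz1 : cosZeta ((a : ℝ) : UnitAddCircle) 1 = -(Complex.log w₁ + Complex.log w₂) / 2 := by
    rw [cosZeta_eq]
    have hneg : -((a : ℝ) : UnitAddCircle) = (((-a : ℝ)) : UnitAddCircle) :=
      (QuotientAddGroup.mk_neg _ a).symm
    rw [hneg, AT.expZeta_one a haz, AT.expZeta_one (-a) hmaz, harg1, harg2]
    ring
  -- product of the two logs' exponentials
  have hu : Complex.exp ((ψ:ℂ) * Complex.I) * Complex.exp (-((ψ:ℂ) * Complex.I)) = 1 := by
    rw [← Complex.exp_add]
    simp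
  have hsum_uv : Complex.exp ((ψ:ℂ) * Complex.I) + Complex.exp (-((ψ:ℂ) * Complex.I))
      = 2 * Complex.cos (ψ:ℂ) := by
    rw [Complex.two_cos, neg_mul]
  have hrealsin : ((2 * Real.sin (ψ/2))^2 : ℝ) = 2 - 2 * Real.cos ψ := by
    have h := Real.sin_sq_eq_half_sub (ψ/2)
    rw [show 2*(ψ/2) = ψ from by ring] at h
    rw [mul_pow, h]
    ring
  have hprod : w₁ * w₂ = (((2 * Real.sin (ψ/2))^2 : ℝ) : ℂ) := by
    calc w₁ * w₂ = 1 - (Complex.exp ((ψ:ℂ) * Complex.I) + Complex.exp (-((ψ:ℂ) * Complex.I)))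
          + Complex.exp ((ψ:ℂ) * Complex.I) * Complex.exp (-((ψ:ℂ) * Complex.I)) := by
          rw [hw1def, hw2def]; ring
      _ = 2 - 2 * Complex.cos (ψ:ℂ) := by rw [hu, hsum_uv]; ring
      _ = (((2 * Real.sin (ψ/2))^2 : ℝ) : ℂ) := by
          rw [hrealsin, ← Complex.ofReal_cos]
          push_cast
          ring
  have hexpne : ∀ c : ℝ, 0 < c → c < 2 * Real.pi → Complex.exp ((c:ℂ) * Complex.I) ≠ 1 := by
    intro c hc1 hc2 h
    rcases Complex.exp_eq_one_iff.mp h with ⟨n, hn⟩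
    have hI : ((c:ℝ):ℂ) * Complex.I = (n:ℂ) * (2 * Real.pi * Complex.I) := hn
    have hre : c = n * (2 * Real.pi) := by
      have := congrArg Complex.im hI
      simpa [Complex.mul_im] using this
    have h1 : (0:ℤ) < n := by
      by_contra h'
      push_neg at h'
      have : (n:ℝ) ≤ 0 := by exact_mod_cast h'
      nlinarith
    have h2 : n < (1:ℤ) := by
      by_contra h'
      push_neg at h'
      have : (1:ℝ) ≤ (n:ℝ) := by exact_mod_cast h'
      nlinarith
    omega
  have hw1 : w₁ ≠ 0 := by
    rw [hw1def, sub_ne_zero]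
    exact fun h => hexpne ψ h0 h2π h.symm
  have hw2 : w₂ ≠ 0 := by
    rw [hw2def, sub_ne_zero]
    intro h
    apply hexpne ψ h0 h2π
    have h9 := hu
    rw [← h, mul_one] at h9
    exact h9
  have hL : Complex.exp (Complex.log w₁ + Complex.log w₂) = (((2 * Real.sin (ψ/2))^2 : ℝ) : ℂ) := by
    rw [Complex.exp_add, Complex.exp_log hw1, Complex.exp_log hw2, hprod]
  refine ⟨hZdiff, ?_, ?_, ?_⟩
  · have harg : -(deriv Z 0) = (Complex.log w₁ + Complex.log w₂) + (Complex.log w₁ + Complex.log w₂) := by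
      rw [hderivZ, hcz1]; ring
    rw [harg, Complex.exp_add, hL]
    push_cast
    ring
  · have harg : -(deriv Z 0) / 2 = Complex.log w₁ + Complex.log w₂ := by
      rw [hderivZ, hcz1]; ring
    rw [harg, hL]
  · have hconj : (starRingEnd ℂ) (Complex.exp ((ψ:ℂ) * Complex.I) - 1)
        = Complex.exp (-((ψ:ℂ) * Complex.I)) - 1 := by
      rw [map_sub, ← Complex.exp_conj]
      simp
    have h4 := Complex.mul_conj (Complex.exp ((ψ:ℂ) * Complex.I) - 1)
    rw [hconj] at h4
    have h5 : ((Complex.normSq (Complex.exp ((ψ:ℂ) * Complex.I) - 1) : ℝ) : ℂ)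
        = (((2 * Real.sin (ψ/2))^2 : ℝ) : ℂ) := by
      rw [← h4, ← hprod, hw1def, hw2def]
      ring
    have h6 : Complex.normSq (Complex.exp ((ψ:ℂ) * Complex.I) - 1) = (2 * Real.sin (ψ/2))^2 :=
      Complex.ofReal_inj.mp h5
    rw [← Complex.sq_norm] at h6
    exact h6.symm
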